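/- arXiv:1305.2648 — 4 statements merged into one kernel-verified Lean document; each statement's English description precedes it below -/
import Mathlib

section
/- Let ℓ : ℝ → [0,∞) be convex with ℓ(z) → 0 as z → -∞ and ℓ(0) > 0. If g is a subgradient of ℓ at 0, then ℓ*(φ) < 0 for every φ ∈ (0, g), and ℓ* attains its minimum value at g. -/
/-- Fenchel conjugate (valued in `EReal`) of a real function. -/
noncomputable def fenchelConj (ℓ : ℝ → ℝ) (φ : ℝ) : EReal :=
  ⨆ x : ℝ, ((φ * x - ℓ x : ℝ) : EReal)

theorem conj_neg_on_subgradient_interval (ℓ : ℝ → ℝ) (g : ℝ)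
    (hconv : ConvexOn ℝ Set.univ ℓ)
    (hnonneg : ∀ x, 0 ≤ ℓ x)
    (hlim : Filter.Tendsto ℓ Filter.atBot (nhds 0))
    (hpos : 0 < ℓ 0)
    (hsub : ∀ y : ℝ, ℓ 0 + g * y ≤ ℓ y) :
    (∀ φ ∈ Set.Ioo (0 : ℝ) g, fenchelConj ℓ φ < 0) ∧
    (∀ φ : ℝ, fenchelConj ℓ g ≤ fenchelConj ℓ φ) := by
  constructor
  · rintro φ ⟨hφ0, hφg⟩
    have hgφ : 0 < g - φ := by linarith
    set M : ℝ := ℓ 0 / (2 * (g - φ)) with hM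
    have hMpos : 0 < M := by positivity
    set c : ℝ := min (ℓ 0 / 2) (φ * M) with hc
    have hcpos : 0 < c := lt_min (by linarith) (by positivity)
    have hbound : ∀ x : ℝ, φ * x - ℓ x ≤ -c := by
      intro x
      rcases le_or_gt x (-M) with hx | hx
      · have h1 : φ * x ≤ φ * (-M) := by nlinarith
        have h2 := hnonneg x
        have h3 : c ≤ φ * M := min_le_right _ _
        nlinarith
      · have h1 := hsub x
        have h2 : (φ - g) * x ≤ (g - φ) * M := by nlinarith
        have h3 : (g - φ) * M = ℓ 0 / 2 := by
          rw [hM]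
          field_simp [hM]
        have h4 : c ≤ ℓ 0 / 2 := min_le_left _ _
        nlinarith
    have hsup : fenchelConj ℓ φ ≤ ((-c : ℝ) : EReal) := by
      refine iSup_le fun x => ?_
      exact_mod_cast hbound x
    refine lt_of_le_of_lt hsup ?_
    rw [show (0 : EReal) = ((0 : ℝ) : EReal) from rfl]
    exact_mod_cast neg_neg_iff_pos.mpr hcpos
  · intro φ
    have h1 : fenchelConj ℓ g ≤ ((-(ℓ 0) : ℝ) : EReal) := by
      refine iSup_le fun x => ?_
      have := hsub x
      exact_mod_cast (by linarith : g * x - ℓ x ≤ -(ℓ 0))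
    have h2 : ((-(ℓ 0) : ℝ) : EReal) ≤ fenchelConj ℓ φ := by
      have := le_iSup (fun x : ℝ => ((φ * x - ℓ x : ℝ) : EReal)) 0
      simpa [fenchelConj] using this
    exact h1.trans h2
end

section
/- Let ξ be a Borel probability measure supported on [−1,+1] and ε ∈ (0,1]. With c_ε as above, define p_ε(r) := (1/ε)(1[r < c_ε] + ((ε − ξ((−∞,c_ε)))/ξ({c_ε}))·1[r = c_ε]) (with convention 0/0 = 0). Then ∫ p_ε dξ = 1, 0 ≤ p_ε ≤ 1/ε everywhere, and p_ε minimizes ∫ r·p(r) dξ(r) over all measurable p with ∫ p dξ = 1 and 0 ≤ p ≤ 1/ε ξ-a.e. -/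
open MeasureTheory

theorem cutoff_density_optimal (ξ : Measure ℝ) [IsProbabilityMeasure ξ]
    (hsupp : ξ (Set.Icc (-1 : ℝ) 1) = 1) (ε : ℝ) (hε : ε ∈ Set.Ioc (0 : ℝ) 1)
    (c : ℝ)
    (hc : c = sSup {c ∈ Set.Icc (-1 : ℝ) 1 | ξ (Set.Iio c) ≤ ENNReal.ofReal ε})
    (pε : ℝ → ℝ)
    (hpε : ∀ r : ℝ, pε r = (1 / ε) *
      ((if r < c then 1 else 0) +
        ((ε - (ξ (Set.Iio c)).toReal) / (ξ {c}).toReal) * (if r = c then 1 else 0))) :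
    (∫ r, pε r ∂ξ) = 1 ∧
    (∀ r, 0 ≤ pε r ∧ pε r ≤ 1 / ε) ∧
    (∀ p : ℝ → ℝ, Integrable p ξ → (∫ r, p r ∂ξ) = 1 →
      (∀ᵐ r ∂ξ, 0 ≤ p r ∧ p r ≤ 1 / ε) →
      (∫ r, r * pε r ∂ξ) ≤ ∫ r, r * p r ∂ξ) := by
  obtain ⟨hε0, hε1⟩ := hε
  set S : Set ℝ := {c ∈ Set.Icc (-1 : ℝ) 1 | ξ (Set.Iio c) ≤ ENNReal.ofReal ε} with hSdef
  have hcompl : ξ (Set.Icc (-1:ℝ) 1)ᶜ = 0 := by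
    rw [measure_compl measurableSet_Icc (measure_ne_top ξ _), hsupp, measure_univ, tsub_self]
  have hneg : (-1:ℝ) ∈ S := by
    refine ⟨⟨le_refl _, by norm_num⟩, ?_⟩
    have h0 : ξ (Set.Iio (-1:ℝ)) = 0 := by
      refine measure_mono_null ?_ hcompl
      intro x hx
      simp only [Set.mem_Iio] at hx
      simp only [Set.mem_compl_iff, Set.mem_Icc, not_and, not_le]
      intro h; linarith
    simp [h0]
  have hS_ne : S.Nonempty := ⟨-1, hneg⟩
  have hS_bdd : BddAbove S := ⟨1, fun x hx => hx.1.2⟩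
  have hc1 : c ≤ 1 := hc ▸ csSup_le hS_ne (fun x hx => hx.1.2)
  have hcm1 : -1 ≤ c := hc ▸ le_csSup hS_bdd hneg
  -- ξ (Iio c) ≤ ε
  have hIio : ξ (Set.Iio c) ≤ ENNReal.ofReal ε := by
    have hunion : Set.Iio c = ⋃ n : ℕ, Set.Iio (c - 1/(n+1)) := by
      ext y
      simp only [Set.mem_Iio, Set.mem_iUnion]
      constructor
      · intro hy
        obtain ⟨n, hn⟩ := exists_nat_one_div_lt (sub_pos.mpr hy)
        exact ⟨n, by push_cast at hn ⊢; linarith⟩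
      · rintro ⟨n, hn⟩
        have h1 : (0:ℝ) < 1/((n:ℝ)+1) := by positivity
        linarith
    have hmono : Monotone (fun n : ℕ => Set.Iio (c - 1/((n:ℝ)+1))) := by
      intro m n hmn
      apply Set.Iio_subset_Iio
      have h2 : (1:ℝ)/((n:ℝ)+1) ≤ 1/((m:ℝ)+1) := by
        apply one_div_le_one_div_of_le (by positivity)
        have : (m:ℝ) ≤ n := by exact_mod_cast hmn
        linarith
      linarith
    rw [hunion, hmono.measure_iUnion]
    refine iSup_le fun n => ?_
    have h1 : c - 1/((n:ℝ)+1) < sSup S := by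
      rw [← hc]
      have : (0:ℝ) < 1/((n:ℝ)+1) := by positivity
      linarith
    obtain ⟨x, hxS, hx⟩ := exists_lt_of_lt_csSup hS_ne h1
    exact le_trans (measure_mono (Set.Iio_subset_Iio hx.le)) hxS.2
  -- ε ≤ ξ (Iic c)
  have hIic : ENNReal.ofReal ε ≤ ξ (Set.Iic c) := by
    by_cases h1c : 1 ≤ c
    · calc ENNReal.ofReal ε ≤ 1 := ENNReal.ofReal_le_one.mpr hε1
        _ = ξ (Set.Icc (-1:ℝ) 1) := hsupp.symm
        _ ≤ ξ (Set.Iic c) := measure_mono (fun x hx => le_trans hx.2 h1c)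
    · push_neg at h1c
      have h1c' : (0:ℝ) < 1 - c := by linarith
      have hinter : Set.Iic c = ⋂ n : ℕ, Set.Iio (c + (1-c)/((n:ℝ)+1)) := by
        ext y
        simp only [Set.mem_Iic, Set.mem_iInter, Set.mem_Iio]
        constructor
        · intro hy n
          have h2 : (0:ℝ) < (1-c)/((n:ℝ)+1) := by positivity
          linarith
        · intro h
          by_contra hyc
          push_neg at hyc
          obtain ⟨n, hn⟩ := exists_nat_one_div_lt (show (0:ℝ) < (y - c)/2 by linarith)
          have hp : (0:ℝ) < 1/((n:ℝ)+1) := by positivity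
          have e1 : (1-c)/((n:ℝ)+1) = (1-c) * (1/((n:ℝ)+1)) := by ring
          have e2 : (1-c) * (1/((n:ℝ)+1)) ≤ 2 * (1/((n:ℝ)+1)) :=
            mul_le_mul_of_nonneg_right (by linarith) hp.le
          have := h n
          nlinarith
      have hanti : Antitone (fun n : ℕ => Set.Iio (c + (1-c)/((n:ℝ)+1))) := by
        intro m n hmn
        apply Set.Iio_subset_Iio
        have h2 : (1-c)/((n:ℝ)+1) ≤ (1-c)/((m:ℝ)+1) := by
          apply div_le_div_of_nonneg_left h1c'.le (by positivity)
          have : (m:ℝ) ≤ n := by exact_mod_cast hmn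
          linarith
        linarith
      rw [hinter, hanti.measure_iInter (fun n => measurableSet_Iio.nullMeasurableSet)
        ⟨0, measure_ne_top ξ _⟩]
      refine le_iInf fun n => ?_
      have hv_gt : c < c + (1-c)/((n:ℝ)+1) := by
        have : (0:ℝ) < (1-c)/((n:ℝ)+1) := by positivity
        linarith
      have hv_le : c + (1-c)/((n:ℝ)+1) ≤ 1 := by
        have : (1-c)/((n:ℝ)+1) ≤ (1-c) := by
          apply div_le_self h1c'.le
          have : (0:ℝ) ≤ (n:ℝ) := Nat.cast_nonneg n
          linarith
        linarith
      have hnotS : c + (1-c)/((n:ℝ)+1) ∉ S := by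
        intro hmem
        have := le_csSup hS_bdd hmem
        rw [← hc] at this
        linarith
      have : ¬ (ξ (Set.Iio (c + (1-c)/((n:ℝ)+1))) ≤ ENNReal.ofReal ε) := by
        intro hle
        exact hnotS ⟨⟨by linarith, hv_le⟩, hle⟩
      exact (not_le.mp this).le
  -- real-valued quantities
  set a := (ξ (Set.Iio c)).toReal with ha
  set b := (ξ {c}).toReal with hb
  have ha0 : 0 ≤ a := ENNReal.toReal_nonneg
  have hb0 : 0 ≤ b := ENNReal.toReal_nonneg
  have haε : a ≤ ε := ENNReal.toReal_le_of_le_ofReal hε0.le hIio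
  have hsplit : ξ (Set.Iic c) = ξ (Set.Iio c) + ξ {c} := by
    rw [← Set.Iio_union_right, measure_union (by simp) (measurableSet_singleton c)]
  have hεab : ε ≤ a + b := by
    have h1 : ENNReal.ofReal ε ≤ ξ (Set.Iio c) + ξ {c} := hsplit ▸ hIic
    have h2 : (ξ (Set.Iio c) + ξ {c}).toReal = a + b :=
      ENNReal.toReal_add (measure_ne_top ξ _) (measure_ne_top ξ _)
    have h3 := ENNReal.toReal_mono (by
      exact ENNReal.add_ne_top.mpr ⟨measure_ne_top ξ _, measure_ne_top ξ _⟩) h1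
    rw [ENNReal.toReal_ofReal hε0.le, h2] at h3
    exact h3
  set θ := (ε - a)/b with hθ
  have hθ0 : 0 ≤ θ := div_nonneg (by linarith) hb0
  have hθ1 : θ ≤ 1 := by
    rcases eq_or_lt_of_le hb0 with h | h
    · simp [hθ, ← h]
    · exact (div_le_one h).mpr (by linarith)
  have hθb : θ * b = ε - a := by
    rcases eq_or_lt_of_le hb0 with h | h
    · have : ε = a := le_antisymm (by linarith [hεab, h.symm]) haε
      simp [← h, this]
    · exact div_mul_cancel₀ _ h.ne'
  -- rewrite pε as indicator sum
  have hpq : pε = fun r => (Set.Iio c).indicator (fun _ => 1/ε) r +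
      ({c} : Set ℝ).indicator (fun _ => θ/ε) r := by
    funext r
    rw [hpε]
    simp only [Set.indicator_apply, Set.mem_Iio, Set.mem_singleton_iff]
    split_ifs with h1 h2
    · exact absurd h2 (ne_of_lt h1)
    · ring
    · ring
    · ring
  have hint_q1 : Integrable ((Set.Iio c).indicator (fun _ => (1/ε : ℝ))) ξ :=
    (integrable_const _).indicator measurableSet_Iio
  have hint_q2 : Integrable (({c}:Set ℝ).indicator (fun _ => (θ/ε : ℝ))) ξ :=
    (integrable_const _).indicator (measurableSet_singleton c)
  have hint_pε : Integrable pε ξ := by rw [hpq]; exact hint_q1.add hint_q2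
  have hIpε : (∫ r, pε r ∂ξ) = 1 := by
    rw [hpq, integral_add hint_q1 hint_q2,
      integral_indicator_const _ measurableSet_Iio,
      integral_indicator_const _ (measurableSet_singleton c)]
    simp only [smul_eq_mul, Measure.real, ← ha, ← hb]
    have e : a * (1/ε) + b * (θ/ε) = (a + θ * b)/ε := by ring
    rw [e, hθb]
    field_simp
    ring
  have hbounds : ∀ r, 0 ≤ pε r ∧ pε r ≤ 1/ε := by
    intro r
    have hε' : (0:ℝ) < 1/ε := by positivity
    rw [hpq]
    simp only [Set.indicator_apply, Set.mem_Iio, Set.mem_singleton_iff]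
    split_ifs with h1 h2
    · exact absurd h2 (ne_of_lt h1)
    · constructor
      · simp only [add_zero]; positivity
      · simp only [add_zero]
        exact le_refl _
    · constructor
      · simp only [zero_add]
        exact div_nonneg hθ0 hε0.le
      · simp only [zero_add]
        gcongr
    · simp only [add_zero]
      exact ⟨le_refl 0, hε'.le⟩
  refine ⟨hIpε, hbounds, ?_⟩
  intro p hpInt hp1 hpae
  have haer : ∀ᵐ r ∂ξ, |r| ≤ 1 := by
    rw [ae_iff]
    refine measure_mono_null ?_ hcompl
    intro x hx
    simp only [Set.mem_setOf_eq, not_le] at hx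
    simp only [Set.mem_compl_iff, Set.mem_Icc, not_and, not_le]
    intro h
    rcases le_or_gt 0 x with h0 | h0
    · rwa [abs_of_nonneg h0] at hx
    · rw [abs_of_neg h0] at hx; linarith
  -- integrability of r * p and r * pε
  have hrp : Integrable (fun r => r * p r) ξ := by
    refine Integrable.mono' (integrable_const (1/ε))
      (aestronglyMeasurable_id.mul hpInt.aestronglyMeasurable) ?_
    filter_upwards [haer, hpae] with r h1 h2
    rw [Real.norm_eq_abs, abs_mul]
    calc |r| * |p r| ≤ 1 * (1/ε) := by
          apply mul_le_mul h1 _ (abs_nonneg _) zero_le_one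
          rw [abs_of_nonneg h2.1]; exact h2.2
      _ = 1/ε := one_mul _
  have hrpε : Integrable (fun r => r * pε r) ξ := by
    refine Integrable.mono' (integrable_const (1/ε))
      (aestronglyMeasurable_id.mul hint_pε.aestronglyMeasurable) ?_
    filter_upwards [haer] with r h1
    rw [Real.norm_eq_abs, abs_mul]
    calc |r| * |pε r| ≤ 1 * (1/ε) := by
          apply mul_le_mul h1 _ (abs_nonneg _) zero_le_one
          rw [abs_of_nonneg (hbounds r).1]; exact (hbounds r).2
      _ = 1/ε := one_mul _
  have key : 0 ≤ ∫ r, (r - c) * (p r - pε r) ∂ξ := by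
    apply integral_nonneg_of_ae
    filter_upwards [hpae] with r hr
    rcases lt_trichotomy r c with h | h | h
    · have hv : pε r = 1/ε := by
        rw [hpε, if_pos h, if_neg (ne_of_lt h)]; ring
      rw [hv]
      exact mul_nonneg_of_nonpos_of_nonpos (by linarith) (by linarith [hr.2])
    · simp [h]
    · have hv : pε r = 0 := by
        rw [hpε, if_neg (not_lt.mpr h.le), if_neg (ne_of_gt h)]; ring
      rw [hv]
      exact mul_nonneg (by linarith) (by linarith [hr.1])
  have hexp : (fun r => (r - c) * (p r - pε r)) =
      fun r => (r * p r - r * pε r) - (c * p r - c * pε r) := by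
    funext r; ring
  have hA : Integrable (fun r => r * p r - r * pε r) ξ := hrp.sub hrpε
  have hcp : Integrable (fun r => c * p r) ξ := hpInt.const_mul c
  have hcpε : Integrable (fun r => c * pε r) ξ := hint_pε.const_mul c
  have hB : Integrable (fun r => c * p r - c * pε r) ξ := hcp.sub hcpε
  rw [hexp, integral_sub hA hB, integral_sub hrp hrpε, integral_sub hcp hcpε,
    integral_const_mul c p, integral_const_mul c pε, hp1, hIpε] at key
  linarith
end

section
/- Let ℓ : ℝ → [0,∞) be convex, differentiable, with ℓ(z) → 0 as z → −∞, ℓ(0) > 0, and let g := ℓ'(0) > 0. Then the restriction of the Fenchel conjugate ℓ* to [0, g] is a strictly decreasing bijection from [0, g] onto [−ℓ(0), 0]. -/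
open Set Filter

theorem conj_restricted_bijection (ℓ : ℝ → ℝ) (β : ℝ)
    (hconv : ConvexOn ℝ Set.univ ℓ)
    (hdiff : Differentiable ℝ ℓ)
    (hnonneg : ∀ x, 0 ≤ ℓ x)
    (hlim : Filter.Tendsto ℓ Filter.atBot (nhds 0))
    (hℓ0 : 0 < ℓ 0)
    (hd : ∀ x, deriv ℓ x ∈ Set.Ioc (0 : ℝ) β)
    (conj : ℝ → ℝ)
    (hconj : ∀ φ, conj φ = ⨆ x : ℝ, (φ * x - ℓ x)) :
    StrictAntiOn conj (Set.Icc 0 (deriv ℓ 0)) ∧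
    Set.BijOn conj (Set.Icc 0 (deriv ℓ 0)) (Set.Icc (-(ℓ 0)) 0) := by
  set g := deriv ℓ 0 with hgdef
  have hg : 0 < g := (hd 0).1
  -- supporting line at 0
  have hsupp : ∀ x, ℓ 0 + g * x ≤ ℓ x := by
    intro x
    rcases lt_trichotomy x 0 with hx | rfl | hx
    · have h := hconv.slope_le_deriv (mem_univ x) (mem_univ 0) hx (hdiff 0)
      rw [slope_def_field, div_le_iff₀ (by linarith)] at h
      linarith
    · simp
    · have h := hconv.deriv_le_slope (mem_univ 0) (mem_univ x) hx (hdiff 0)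
      rw [slope_def_field, le_div_iff₀ (by linarith)] at h
      linarith
  -- pointwise upper bounds
  have hub' : ∀ φ, φ ≤ g → ∀ x, 0 ≤ x → φ * x - ℓ x ≤ -(ℓ 0) := by
    intro φ hφ x hx
    have := hsupp x
    nlinarith [mul_le_mul_of_nonneg_right hφ hx]
  have hub : ∀ φ ∈ Icc (0:ℝ) g, ∀ x, φ * x - ℓ x ≤ 0 := by
    intro φ hφ x
    rcases le_or_gt 0 x with hx | hx
    · have := hub' φ hφ.2 x hx; linarith
    · have h1 : φ * x ≤ 0 := mul_nonpos_of_nonneg_of_nonpos hφ.1 hx.le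
      have := hnonneg x; linarith
  have hbdd : ∀ φ ∈ Icc (0:ℝ) g, BddAbove (Set.range fun x => φ * x - ℓ x) := by
    intro φ hφ
    exact ⟨0, by rintro y ⟨x, rfl⟩; exact hub φ hφ x⟩
  have hle : ∀ x φ, φ ∈ Icc (0:ℝ) g → φ * x - ℓ x ≤ conj φ := by
    intro x φ hφ
    rw [hconj]
    exact le_ciSup (hbdd φ hφ) x
  have hle0 : ∀ φ ∈ Icc (0:ℝ) g, conj φ ≤ 0 := by
    intro φ hφ
    rw [hconj]; exact ciSup_le (hub φ hφ)
  have hgelb : ∀ φ ∈ Icc (0:ℝ) g, -(ℓ 0) ≤ conj φ := by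
    intro φ hφ
    have := hle 0 φ hφ; simpa using this
  -- conj g = -(ℓ 0)
  have hG : conj g = -(ℓ 0) := by
    refine le_antisymm ?_ (hgelb g ⟨hg.le, le_rfl⟩)
    rw [hconj]
    refine ciSup_le fun x => ?_
    have := hsupp x; linarith
  -- values of ℓ get arbitrarily small
  have hsmall : ∀ ε : ℝ, 0 < ε → ∃ x, ℓ x < ε := by
    intro ε hε
    exact (hlim.eventually (eventually_lt_nhds hε)).exists
  -- conj 0 = 0
  have hH : conj 0 = 0 := by
    refine le_antisymm (hle0 0 ⟨le_rfl, hg.le⟩) ?_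
    by_contra h
    push_neg at h
    obtain ⟨x, hx⟩ := hsmall (-(conj 0)) (by linarith)
    have := hle x 0 ⟨le_rfl, hg.le⟩
    simp only [zero_mul, zero_sub] at this
    linarith
  -- strict lower bound for φ < g
  have hE : ∀ φ, 0 ≤ φ → φ < g → -(ℓ 0) < conj φ := by
    intro φ hφ0 hφg
    have hder : Tendsto (slope ℓ 0) (nhdsWithin 0 {(0:ℝ)}ᶜ) (nhds g) :=
      hasDerivAt_iff_tendsto_slope.mp (hdiff 0).hasDerivAt
    have hder' : Tendsto (slope ℓ 0) (nhdsWithin 0 (Iio (0:ℝ))) (nhds g) :=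
      hder.mono_left (nhdsWithin_mono _ (fun x hx => ne_of_lt hx))
    have hev : ∀ᶠ x in nhdsWithin 0 (Iio (0:ℝ)), φ < slope ℓ 0 x :=
      hder'.eventually (eventually_gt_nhds hφg)
    obtain ⟨x, hxs, hx0⟩ := (hev.and self_mem_nhdsWithin).exists
    have hx0' : (x:ℝ) < 0 := hx0
    rw [slope_def_field, sub_zero, lt_div_iff_of_neg hx0'] at hxs
    have hkey : -(ℓ 0) < φ * x - ℓ x := by linarith
    exact lt_of_lt_of_le hkey (hle x φ ⟨hφ0, hφg.le⟩)
  -- convexity-type combination with endpoint g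
  have hF : ∀ a ∈ Icc (0:ℝ) g, ∀ t ∈ Icc (0:ℝ) 1,
      conj ((1 - t) * a + t * g) ≤ (1 - t) * conj a + t * (-(ℓ 0)) := by
    intro a ha t ht
    rw [hconj]
    refine ciSup_le fun x => ?_
    have h1 : a * x - ℓ x ≤ conj a := hle x a ha
    have h2 : g * x - ℓ x ≤ conj g := hle x g ⟨hg.le, le_rfl⟩
    rw [hG] at h2
    nlinarith [mul_le_mul_of_nonneg_left h1 (sub_nonneg.2 ht.2),
      mul_le_mul_of_nonneg_left h2 ht.1]
  -- strict antitonicity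
  have hanti : StrictAntiOn conj (Icc 0 g) := by
    intro a ha b hb hab
    rcases eq_or_lt_of_le hb.2 with hbg | hbg
    · rw [hbg, hG]
      exact hE a ha.1 (by rw [← hbg]; exact hab)
    · set t := (b - a) / (g - a) with htdef
      have hga : 0 < g - a := by linarith
      have ht0 : 0 < t := div_pos (by linarith) hga
      have ht1 : t < 1 := (div_lt_one hga).2 (by linarith)
      have hcomb : (1 - t) * a + t * g = b := by rw [htdef]; field_simp; ring
      have h1 := hF a ha t ⟨ht0.le, ht1.le⟩
      rw [hcomb] at h1
      have h2 := hE b hb.1 hbg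
      by_contra h
      push_neg at h
      have h3 : (1 - t) * conj a ≤ (1 - t) * conj b :=
        mul_le_mul_of_nonneg_left h (by linarith)
      have h4 : t * (-(ℓ 0)) < t * conj b := mul_lt_mul_of_pos_left h2 ht0
      linarith
  -- Lipschitz-type bound away from 0
  have hlip : ∀ ε : ℝ, 0 < ε → ∀ φ ∈ Icc ε g, ∀ φ' ∈ Icc ε g,
      conj φ ≤ conj φ' + (ℓ 0 / ε) * |φ - φ'| := by
    intro ε hε φ hφ φ' hφ'
    have hφI : φ ∈ Icc (0:ℝ) g := ⟨le_trans hε.le hφ.1, hφ.2⟩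
    have hφ'I : φ' ∈ Icc (0:ℝ) g := ⟨le_trans hε.le hφ'.1, hφ'.2⟩
    have hR : 0 < ℓ 0 / ε := div_pos hℓ0 hε
    have h0 : 0 ≤ (ℓ 0 / ε) * |φ - φ'| := by positivity
    rw [hconj]
    refine ciSup_le fun x => ?_
    rcases le_or_gt 0 x with hx | hx
    · have ha := hub' φ hφI.2 x hx
      have hb := hgelb φ' hφ'I
      linarith
    · rcases le_or_gt x (-(ℓ 0 / ε)) with hxR | hxR
      · have h1 : φ * x ≤ ε * x := mul_le_mul_of_nonpos_right hφ.1 hx.le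
        have h2 : ε * x ≤ ε * (-(ℓ 0 / ε)) := mul_le_mul_of_nonneg_left hxR hε.le
        have h3 : ε * (-(ℓ 0 / ε)) = -(ℓ 0) := by field_simp
        have h4 := hnonneg x
        have h5 := hgelb φ' hφ'I
        linarith
      · have h1 : φ' * x - ℓ x ≤ conj φ' := hle x φ' hφ'I
        have h2 : (φ - φ') * x ≤ |φ - φ'| * (ℓ 0 / ε) := by
          calc (φ - φ') * x ≤ |(φ - φ') * x| := le_abs_self _
            _ = |φ - φ'| * |x| := abs_mul _ _
            _ ≤ |φ - φ'| * (ℓ 0 / ε) := by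
                apply mul_le_mul_of_nonneg_left _ (abs_nonneg _)
                rw [abs_of_neg hx]; linarith
        nlinarith
  -- continuity on Icc 0 g
  have hcont : ContinuousOn conj (Icc 0 g) := by
    intro φ₀ hφ₀
    rw [Metric.continuousWithinAt_iff]
    intro ε hε
    rcases eq_or_lt_of_le hφ₀.1 with hφ₀0 | hφ₀pos
    · -- at 0
      obtain ⟨x₀, hx₀⟩ := hsmall (ε / 2) (by linarith)
      refine ⟨(ε / 2) / (|x₀| + 1), by positivity, ?_⟩
      intro φ hφ hdist
      rw [Real.dist_eq, ← hφ₀0, sub_zero] at hdist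
      rw [Real.dist_eq, ← hφ₀0, hH, sub_zero, abs_lt]
      have hφ0 : 0 ≤ φ := hφ.1
      have hφδ : φ < (ε / 2) / (|x₀| + 1) := lt_of_abs_lt hdist
      constructor
      · have h1 : φ * x₀ - ℓ x₀ ≤ conj φ := hle x₀ φ hφ
        have h2 : -|x₀| ≤ x₀ := neg_abs_le _
        have h3 : φ * (-|x₀|) ≤ φ * x₀ := mul_le_mul_of_nonneg_left h2 hφ0
        have h4 : 0 ≤ |x₀| := abs_nonneg _
        have h5 : φ * |x₀| < ε / 2 := by
          calc φ * |x₀| ≤ φ * (|x₀| + 1) := by nlinarith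
            _ < (ε / 2) / (|x₀| + 1) * (|x₀| + 1) :=
                mul_lt_mul_of_pos_right hφδ (by linarith)
            _ = ε / 2 := by field_simp
        nlinarith
      · have := hle0 φ hφ; linarith
    · -- at φ₀ > 0
      set ε₀ := φ₀ / 2 with hε₀def
      have hε₀ : 0 < ε₀ := by positivity
      set R := ℓ 0 / ε₀ with hRdef
      have hR : 0 < R := div_pos hℓ0 hε₀
      refine ⟨min ε₀ (ε / (R + 1)), by positivity, ?_⟩
      intro φ hφ hdist
      rw [Real.dist_eq] at hdist ⊢
      have hd1 : |φ - φ₀| < ε₀ := lt_of_lt_of_le hdist (min_le_left _ _)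
      have hd2 : |φ - φ₀| < ε / (R + 1) := lt_of_lt_of_le hdist (min_le_right _ _)
      have habs := abs_lt.1 hd1
      have hφlb : ε₀ ≤ φ := by
        rw [hε₀def] at habs ⊢; linarith
      have hφmem : φ ∈ Icc ε₀ g := ⟨hφlb, hφ.2⟩
      have hφ₀mem : φ₀ ∈ Icc ε₀ g := ⟨by rw [hε₀def]; linarith, hφ₀.2⟩
      have ha := hlip ε₀ hε₀ φ hφmem φ₀ hφ₀mem
      have hb := hlip ε₀ hε₀ φ₀ hφ₀mem φ hφmem
      rw [abs_sub_comm] at hb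
      have h5 : R * |φ - φ₀| < R * (ε / (R + 1)) := mul_lt_mul_of_pos_left hd2 hR
      have h6 : R * (ε / (R + 1)) < ε := by
        have heq : R * (ε / (R + 1)) = ε * (R / (R + 1)) := by ring
        have hlt : R / (R + 1) < 1 := (div_lt_one (by linarith)).2 (by linarith)
        rw [heq]
        nlinarith
      rw [abs_lt]
      constructor <;> linarith
  -- assemble
  refine ⟨hanti, fun φ hφ => ⟨hgelb φ hφ, hle0 φ hφ⟩, hanti.injOn, ?_⟩
  have hIVT := intermediate_value_Icc' hg.le hcont
  rw [hG, hH] at hIVT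
  exact hIVT
end

section
/- Let ν be a probability measure on Z, ℓ : ℝ → ℝ a nonnegative convex Lipschitz loss with Lipschitz constant β, and let the conjugate functional be (∫ℓ)*(p) := sup{∫ fp dν − ∫ ℓ(f) dν : f ∈ L¹(ν)} for p ∈ L^∞(ν). If ν({z : p(z) ∉ [0, β]}) > 0, then (∫ℓ)*(p) = ∞. -/
open MeasureTheory

lemma aux_indicator_value {Z : Type*} [MeasurableSpace Z]
    (ν : Measure Z) [IsProbabilityMeasure ν]
    (ℓ : ℝ → ℝ) (hnonneg : ∀ x, 0 ≤ ℓ x)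
    (p : Z → ℝ) (hpint : Integrable p ν)
    (S : Set Z) (hS : MeasurableSet S)
    (t a : ℝ) (ha : ∀ z ∈ S, a ≤ t * p z) :
    ∃ f : {f : Z → ℝ // Integrable f ν},
      a * (ν S).toReal - ℓ t * (ν S).toReal - ℓ 0
        ≤ (∫ z, f.1 z * p z ∂ν) - ∫ z, ℓ (f.1 z) ∂ν := by
  have hfint : Integrable (S.indicator fun _ => t) ν := by
    refine (integrable_indicator_iff hS).2 ?_
    exact integrableOn_const (measure_ne_top ν S)
  refine ⟨⟨S.indicator fun _ => t, hfint⟩, ?_⟩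
  have h1 : (∫ z, (S.indicator fun _ => t) z * p z ∂ν) = ∫ z in S, t * p z ∂ν := by
    rw [← integral_indicator hS]
    congr 1
    funext z
    by_cases hz : z ∈ S <;> simp [hz]
  have h2 : (∫ z, ℓ ((S.indicator fun _ => t) z) ∂ν)
      = (ℓ t - ℓ 0) * (ν S).toReal + ℓ 0 := by
    have : (fun z => ℓ ((S.indicator fun _ => t) z))
        = fun z => S.indicator (fun _ => ℓ t - ℓ 0) z + ℓ 0 := by
      funext z
      by_cases hz : z ∈ S <;> simp [hz]
    rw [this, integral_add ((integrable_indicator_iff hS).2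
      (integrableOn_const (measure_ne_top ν S))) (integrable_const _)]
    rw [integral_indicator_const _ hS, integral_const]
    simp [mul_comm, measureReal_def]
  have h3 : a * (ν S).toReal ≤ ∫ z in S, t * p z ∂ν := by
    have := setIntegral_mono_on (integrableOn_const (measure_ne_top ν S))
      ((hpint.const_mul t).integrableOn) hS ha
    rwa [setIntegral_const, smul_eq_mul, mul_comm] at this
  have hm0 : 0 ≤ (ν S).toReal := ENNReal.toReal_nonneg
  have hl0 : 0 ≤ ℓ 0 := hnonneg 0
  rw [h1, h2]
  nlinarith [h3]

theorem conj_functional_infinite_off_range {Z : Type*} [MeasurableSpace Z]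
    (ν : Measure Z) [IsProbabilityMeasure ν]
    (ℓ : ℝ → ℝ) (β : ℝ)
    (hconv : ConvexOn ℝ Set.univ ℓ)
    (hnonneg : ∀ x, 0 ≤ ℓ x)
    (hlim : Filter.Tendsto ℓ Filter.atBot (nhds 0))
    (hLip : ∀ x y, |ℓ x - ℓ y| ≤ β * |x - y|)
    (p : Z → ℝ)
    (hmeas : Measurable p)
    (hbdd : ∃ C : ℝ, ∀ z, |p z| ≤ C)
    (hbad : 0 < ν {z | p z ∉ Set.Icc (0 : ℝ) β}) :
    (⨆ f : {f : Z → ℝ // Integrable f ν},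
      (((∫ z, f.1 z * p z ∂ν) - ∫ z, ℓ (f.1 z) ∂ν : ℝ) : EReal)) = ⊤ := by
  classical
  obtain ⟨C, hC⟩ := hbdd
  have hpint : Integrable p ν :=
    ⟨hmeas.aestronglyMeasurable, HasFiniteIntegral.of_bounded (C := C)
      (Filter.Eventually.of_forall fun z => by simpa using hC z)⟩
  have hl0 : 0 ≤ ℓ 0 := hnonneg 0
  -- key claim
  have key : ∀ r : ℝ, ∃ f : {f : Z → ℝ // Integrable f ν},
      r < (∫ z, f.1 z * p z ∂ν) - ∫ z, ℓ (f.1 z) ∂ν := by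
    intro r
    have hsub : {z | p z ∉ Set.Icc (0:ℝ) β} ⊆ {z | p z < 0} ∪ {z | β < p z} := by
      intro z hz
      simp only [Set.mem_setOf_eq, Set.mem_Icc, not_and_or, not_le] at hz
      exact hz
    have hcase : ν {z | p z < 0} ≠ 0 ∨ ν {z | β < p z} ≠ 0 := by
      by_contra h
      push_neg at h
      have : ν {z | p z ∉ Set.Icc (0:ℝ) β} = 0 :=
        measure_mono_null hsub (measure_union_null h.1 h.2)
      exact absurd this (ne_of_gt hbad)
    rcases hcase with hA | hB
    · -- negative part
      have hsub2 : {z | p z < 0} ⊆ ⋃ n : ℕ, {z | p z ≤ -(1/((n:ℝ)+1))} := by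
        intro z hz
        have h1 : (0:ℝ) < -p z := by simpa using hz
        obtain ⟨n, hn⟩ := exists_nat_gt (1 / (-p z))
        refine Set.mem_iUnion.2 ⟨n, ?_⟩
        have hn1 : 1 / (-p z) < (n:ℝ)+1 := by linarith
        have h2 : 1 < ((n:ℝ)+1) * (-p z) := by
          rw [div_lt_iff₀ h1] at hn1; linarith
        have h3 : 1/((n:ℝ)+1) ≤ -p z := by
          rw [div_le_iff₀ (by positivity)]; nlinarith
        show p z ≤ -(1/((n:ℝ)+1))
        linarith
      obtain ⟨n, hn⟩ : ∃ n : ℕ, ν {z | p z ≤ -(1/((n:ℝ)+1))} ≠ 0 := by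
        by_contra hall
        push_neg at hall
        exact hA (measure_mono_null hsub2 (measure_iUnion_null hall))
      set ε : ℝ := 1/((n:ℝ)+1) with hε
      have hεpos : 0 < ε := by positivity
      set S : Set Z := {z | p z ≤ -ε} with hSdef
      have hS : MeasurableSet S := hmeas measurableSet_Iic
      set m : ℝ := (ν S).toReal with hm
      have hmpos : 0 < m := ENNReal.toReal_pos hn (measure_ne_top _ _)
      have hm1 : m ≤ 1 := by
        have := ENNReal.toReal_mono (by simp) (prob_le_one (μ := ν) (s := S))
        simpa using this
      -- from hlim: eventually ℓ < 1
      obtain ⟨N, hN⟩ := Filter.eventually_atBot.1 (hlim.eventually_lt_const one_pos)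
      set c : ℝ := max (max 1 (-N)) ((r + 2*ℓ 0 + 2)/(ε*m)) with hc
      have hc1 : 1 ≤ c := le_trans (le_max_left _ _) (le_max_left _ _)
      have hcN : -N ≤ c := le_trans (le_max_right _ _) (le_max_left _ _)
      have hcr : r + 2*ℓ 0 + 2 ≤ c * (ε*m) := by
        have h4 : (r + 2*ℓ 0 + 2)/(ε*m) ≤ c := le_max_right _ _
        calc r + 2*ℓ 0 + 2 = ((r + 2*ℓ 0 + 2)/(ε*m)) * (ε*m) := by
              field_simp
          _ ≤ c * (ε*m) := by
              apply mul_le_mul_of_nonneg_right h4 (by positivity)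
      obtain ⟨f, hf⟩ := aux_indicator_value ν ℓ hnonneg p hpint S hS (-c) (c*ε)
        (fun z hz => by
          have hpz : p z ≤ -ε := hz
          nlinarith)
      refine ⟨f, lt_of_lt_of_le ?_ hf⟩
      have hℓc : ℓ (-c) < 1 := hN (-c) (by linarith)
      have hℓc0 : 0 ≤ ℓ (-c) := hnonneg _
      nlinarith
    · -- part above β
      have hsub2 : {z | β < p z} ⊆ ⋃ n : ℕ, {z | β + 1/((n:ℝ)+1) ≤ p z} := by
        intro z hz
        have h1 : (0:ℝ) < p z - β := by simpa [sub_pos] using hz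
        obtain ⟨n, hn⟩ := exists_nat_gt (1 / (p z - β))
        refine Set.mem_iUnion.2 ⟨n, ?_⟩
        have hn1 : 1 / (p z - β) < (n:ℝ)+1 := by linarith
        have h2 : 1 < ((n:ℝ)+1) * (p z - β) := by
          rw [div_lt_iff₀ h1] at hn1; linarith
        have h3 : 1/((n:ℝ)+1) ≤ p z - β := by
          rw [div_le_iff₀ (by positivity)]; nlinarith
        show β + 1/((n:ℝ)+1) ≤ p z
        linarith
      obtain ⟨n, hn⟩ : ∃ n : ℕ, ν {z | β + 1/((n:ℝ)+1) ≤ p z} ≠ 0 := by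
        by_contra hall
        push_neg at hall
        exact hB (measure_mono_null hsub2 (measure_iUnion_null hall))
      set ε : ℝ := 1/((n:ℝ)+1) with hε
      have hεpos : 0 < ε := by positivity
      set S : Set Z := {z | β + ε ≤ p z} with hSdef
      have hS : MeasurableSet S := by
        have : S = p ⁻¹' Set.Ici (β + ε) := rfl
        rw [this]; exact hmeas measurableSet_Ici
      set m : ℝ := (ν S).toReal with hm
      have hmpos : 0 < m := ENNReal.toReal_pos hn (measure_ne_top _ _)
      have hm1 : m ≤ 1 := by
        have := ENNReal.toReal_mono (by simp) (prob_le_one (μ := ν) (s := S))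
        simpa using this
      set c : ℝ := max 1 ((r + 2*ℓ 0 + 1)/(ε*m)) with hc
      have hc1 : 1 ≤ c := le_max_left _ _
      have hcr : r + 2*ℓ 0 + 1 ≤ c * (ε*m) := by
        have h4 : (r + 2*ℓ 0 + 1)/(ε*m) ≤ c := le_max_right _ _
        calc r + 2*ℓ 0 + 1 = ((r + 2*ℓ 0 + 1)/(ε*m)) * (ε*m) := by
              field_simp
          _ ≤ c * (ε*m) := by
              apply mul_le_mul_of_nonneg_right h4 (by positivity)
      obtain ⟨f, hf⟩ := aux_indicator_value ν ℓ hnonneg p hpint S hS c (c*(β+ε))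
        (fun z hz => by
          have hpz : β + ε ≤ p z := hz
          nlinarith)
      refine ⟨f, lt_of_lt_of_le ?_ hf⟩
      have hℓc : ℓ c - ℓ 0 ≤ β * c := by
        have := hLip c 0
        rw [abs_le] at this
        have habs : |c - 0| = c := by rw [sub_zero, abs_of_pos (by linarith)]
        rw [habs] at this
        exact this.2
      nlinarith
  rw [iSup_eq_top]
  intro b hb
  induction b using EReal.rec with
  | bot => obtain ⟨f, _⟩ := key 0; exact ⟨f, EReal.bot_lt_coe _⟩
  | coe r => obtain ⟨f, hf⟩ := key r; exact ⟨f, EReal.coe_lt_coe_iff.2 hf⟩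
  | top => exact absurd hb (lt_irrefl _)
end
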